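/- Let X and Y be real random variables taking values in [a, b] (a ≤ b), and U a random element of a measurable space, all defined on a common probability space. If the total variation distance between the law of (X, U) and the law of (Y, U) is at most ε, then E| E[X | σ(U)] − E[Y | σ(U)] | ≤ (b − a) ε. -/

import Mathlib

open MeasureTheory

/-- Total variation distance between two measures:
`sup_{A measurable} |μ(A) − ν(A)|`. -/
noncomputable def tvDist {𝒴 : Type*} [MeasurableSpace 𝒴] (μ ν : Measure 𝒴) : ℝ :=
  ⨆ A : {A : Set 𝒴 // MeasurableSet A}, |(μ A.1).toReal - (ν A.1).toReal|

lemma aux_bdd_integrable {α : Type*} [MeasurableSpace α] (μ : Measure α) [IsFiniteMeasure μ]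
    (f : α → ℝ) (hf : Measurable f) (C : ℝ) (hC : ∀ᵐ x ∂μ, |f x| ≤ C) :
    Integrable f μ :=
  Integrable.mono' (integrable_const C) hf.aestronglyMeasurable hC

lemma aux_tv {α : Type*} [MeasurableSpace α] (μ ν : Measure α)
    [IsProbabilityMeasure μ] [IsProbabilityMeasure ν]
    (f : α → ℝ) (hf : Measurable f) (M ε : ℝ) (hM : 0 ≤ M) (hε : 0 ≤ ε)
    (h0μ : 0 ≤ᵐ[μ] f) (hMμ : f ≤ᵐ[μ] fun _ => M)
    (h0ν : 0 ≤ᵐ[ν] f) (hMν : f ≤ᵐ[ν] fun _ => M)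
    (hset : ∀ A : Set α, MeasurableSet A → (μ A).toReal ≤ (ν A).toReal + ε) :
    ∫ x, f x ∂μ ≤ ∫ x, f x ∂ν + M * ε := by
  have hintμ : Integrable f μ := by
    apply aux_bdd_integrable μ f hf M
    filter_upwards [h0μ, hMμ] with x h1 h2
    rw [abs_of_nonneg h1]; exact h2
  have hintν : Integrable f ν := by
    apply aux_bdd_integrable ν f hf M
    filter_upwards [h0ν, hMν] with x h1 h2
    rw [abs_of_nonneg h1]; exact h2
  rw [hintμ.integral_eq_integral_Ioc_meas_le h0μ hMμ,
      hintν.integral_eq_integral_Ioc_meas_le h0ν hMν]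
  have hmeasg : ∀ (κ : Measure α), Measurable (fun t : ℝ => (κ {a | t ≤ f a}).toReal) := by
    intro κ
    apply Measurable.ennreal_toReal
    apply Antitone.measurable
    intro s t hst
    exact measure_mono (fun a ha => hst.trans ha)
  have hone : ∀ (κ : Measure α) [IsProbabilityMeasure κ] (t : ℝ),
      (κ {a | t ≤ f a}).toReal ≤ 1 := by
    intro κ _ t
    have := measure_mono (μ := κ) (Set.subset_univ {a | t ≤ f a})
    calc (κ {a | t ≤ f a}).toReal ≤ (κ Set.univ).toReal :=
          ENNReal.toReal_mono (measure_ne_top _ _) this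
      _ = 1 := by simp
  have hgν_int : IntegrableOn (fun t => (ν {a | t ≤ f a}).toReal) (Set.Ioc 0 M) := by
    apply Integrable.mono' (integrable_const 1) ((hmeasg ν).aestronglyMeasurable)
    apply ae_of_all
    intro t
    rw [Real.norm_eq_abs, abs_of_nonneg ENNReal.toReal_nonneg]
    exact hone ν t
  have hconst_int : IntegrableOn (fun _ : ℝ => ε) (Set.Ioc 0 M) :=
    integrableOn_const measure_Ioc_lt_top.ne
  calc ∫ t in Set.Ioc 0 M, (μ {a | t ≤ f a}).toReal
      ≤ ∫ t in Set.Ioc 0 M, ((ν {a | t ≤ f a}).toReal + ε) := by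
        apply integral_mono_of_nonneg (ae_of_all _ fun t => ENNReal.toReal_nonneg)
          (hgν_int.add hconst_int)
        exact ae_of_all _ fun t => hset _ (measurableSet_le measurable_const hf)
    _ = (∫ t in Set.Ioc 0 M, (ν {a | t ≤ f a}).toReal) + M * ε := by
        rw [integral_add hgν_int hconst_int, setIntegral_const]
        simp [Real.volume_Ioc, ENNReal.toReal_ofReal hM, mul_comm, max_eq_left hM]


/-- for `X, Y` real random variables taking values in `[a,b]` and `U` a
random element, if `d_TV(law(X,U), law(Y,U)) ≤ ε`, then
`E|E[X|σ(U)] − E[Y|σ(U)]| ≤ (b − a)ε`. -/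
theorem stmt13
    {Ω 𝒴 : Type*} [MeasurableSpace Ω] [m𝒴 : MeasurableSpace 𝒴]
    (ℙ : Measure Ω) [IsProbabilityMeasure ℙ]
    (a b : ℝ) (hab : a ≤ b)
    (X Y : Ω → ℝ) (hX : Measurable X) (hY : Measurable Y)
    (hXab : ∀ ω, X ω ∈ Set.Icc a b) (hYab : ∀ ω, Y ω ∈ Set.Icc a b)
    (U : Ω → 𝒴) (hU : Measurable U)
    (ε : ℝ) (hε : 0 ≤ ε)
    (htv : tvDist (Measure.map (fun ω => (X ω, U ω)) ℙ)
                  (Measure.map (fun ω => (Y ω, U ω)) ℙ) ≤ ε) :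
    ∫ ω, |(ℙ[X | MeasurableSpace.comap U m𝒴]) ω
            - (ℙ[Y | MeasurableSpace.comap U m𝒴]) ω| ∂ℙ
      ≤ (b - a) * ε := by
  classical
  have hm := measurable_iff_comap_le.1 hU
  -- integrability of X, Y
  have hbX : ∀ ω, |X ω| ≤ max |a| |b| := fun ω => abs_le_max_abs_abs (hXab ω).1 (hXab ω).2
  have hbY : ∀ ω, |Y ω| ≤ max |a| |b| := fun ω => abs_le_max_abs_abs (hYab ω).1 (hYab ω).2
  have hXint : Integrable X ℙ := aux_bdd_integrable ℙ X hX _ (ae_of_all _ hbX)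
  have hYint : Integrable Y ℙ := aux_bdd_integrable ℙ Y hY _ (ae_of_all _ hbY)
  set Z := fun ω => (ℙ[X|MeasurableSpace.comap U m𝒴]) ω - (ℙ[Y|MeasurableSpace.comap U m𝒴]) ω with hZ_def
  have hZint : Integrable Z ℙ := integrable_condExp.sub integrable_condExp
  have hZm : StronglyMeasurable[MeasurableSpace.comap U m𝒴] Z :=
    stronglyMeasurable_condExp.sub stronglyMeasurable_condExp
  set S := {ω | 0 ≤ Z ω} with hS_def
  have hSm : MeasurableSet[MeasurableSpace.comap U m𝒴] S :=
    measurableSet_le measurable_const hZm.measurable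
  have hScm : MeasurableSet[MeasurableSpace.comap U m𝒴] Sᶜ := hSm.compl
  have hS : MeasurableSet S := hm _ hSm
  have hex : ∃ B, MeasurableSet B ∧ U ⁻¹' B = S := hSm
  obtain ⟨B, hB, hBS⟩ := hex
  -- the test function
  set f : ℝ × 𝒴 → ℝ := fun p => if p.2 ∈ B then p.1 - a else b - p.1 with hf_def
  have hf : Measurable f := by
    apply Measurable.ite (measurable_snd hB)
    · exact measurable_fst.sub measurable_const
    · exact measurable_const.sub measurable_fst
  set μ := Measure.map (fun ω => (X ω, U ω)) ℙ with hμ_def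
  set ν := Measure.map (fun ω => (Y ω, U ω)) ℙ with hν_def
  have hμP : IsProbabilityMeasure μ := by
    rw [hμ_def]; exact Measure.isProbabilityMeasure_map (hX.prodMk hU).aemeasurable
  have hνP : IsProbabilityMeasure ν := by
    rw [hν_def]; exact Measure.isProbabilityMeasure_map (hY.prodMk hU).aemeasurable
  -- pointwise bounds on f along the maps
  have hptw : ∀ (W : Ω → ℝ), (∀ ω, W ω ∈ Set.Icc a b) →
      ∀ ω, 0 ≤ f (W ω, U ω) ∧ f (W ω, U ω) ≤ b - a := by
    intro W hW ω
    obtain ⟨h1, h2⟩ := hW ω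
    simp only [hf_def]
    split <;> constructor <;> linarith
  -- value of ∫ f under the pushforward laws
  have comp : ∀ (W : Ω → ℝ), Measurable W → (∀ ω, W ω ∈ Set.Icc a b) →
      Integrable W ℙ →
      ∫ p, f p ∂(Measure.map (fun ω => (W ω, U ω)) ℙ)
        = (∫ ω in S, W ω ∂ℙ - ∫ ω in Sᶜ, W ω ∂ℙ)
          + (b * (ℙ Sᶜ).toReal - a * (ℙ S).toReal) := by
    intro W hW hWab hWint
    rw [integral_map (hW.prodMk hU).aemeasurable hf.aestronglyMeasurable]
    have hcomp_meas : Measurable (fun ω => f (W ω, U ω)) := hf.comp (hW.prodMk hU)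
    have hcomp_int : Integrable (fun ω => f (W ω, U ω)) ℙ := by
      apply aux_bdd_integrable ℙ _ hcomp_meas (b - a)
      apply ae_of_all
      intro ω
      obtain ⟨h1, h2⟩ := hptw W hWab ω
      rw [abs_of_nonneg h1]; exact h2
    rw [← integral_add_compl hS hcomp_int]
    have hmemS : ∀ ω, ω ∈ S ↔ U ω ∈ B := by
      intro ω; rw [← hBS]; rfl
    have e1 : ∫ ω in S, f (W ω, U ω) ∂ℙ = ∫ ω in S, (W ω - a) ∂ℙ := by
      apply setIntegral_congr_fun hS
      intro ω hω
      simp only [hf_def]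
      rw [if_pos ((hmemS ω).1 hω)]
    have e2 : ∫ ω in Sᶜ, f (W ω, U ω) ∂ℙ = ∫ ω in Sᶜ, (b - W ω) ∂ℙ := by
      apply setIntegral_congr_fun hS.compl
      intro ω hω
      simp only [hf_def]
      rw [if_neg (fun h => hω ((hmemS ω).2 h))]
    rw [e1, e2, integral_sub hWint.integrableOn (integrableOn_const (measure_lt_top _ _).ne),
        integral_sub (show IntegrableOn (fun _ => b) Sᶜ ℙ from integrableOn_const (measure_lt_top _ _).ne) hWint.integrableOn,
        setIntegral_const, setIntegral_const]
    simp only [smul_eq_mul, measureReal_def]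
    ring
  -- ∫ |Z| in terms of set integrals of X and Y
  have hcondS : ∫ ω in S, Z ω ∂ℙ = ∫ ω in S, X ω ∂ℙ - ∫ ω in S, Y ω ∂ℙ := by
    rw [hZ_def]
    rw [integral_sub integrable_condExp.integrableOn integrable_condExp.integrableOn,
        setIntegral_condExp hm hXint hSm, setIntegral_condExp hm hYint hSm]
  have hcondSc : ∫ ω in Sᶜ, Z ω ∂ℙ = ∫ ω in Sᶜ, X ω ∂ℙ - ∫ ω in Sᶜ, Y ω ∂ℙ := by
    rw [hZ_def]
    rw [integral_sub integrable_condExp.integrableOn integrable_condExp.integrableOn,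
        setIntegral_condExp hm hXint hScm, setIntegral_condExp hm hYint hScm]
  have habsZ : ∫ ω, |Z ω| ∂ℙ = ∫ ω in S, Z ω ∂ℙ - ∫ ω in Sᶜ, Z ω ∂ℙ := by
    rw [← integral_add_compl hS hZint.abs]
    have e1 : ∫ ω in S, |Z ω| ∂ℙ = ∫ ω in S, Z ω ∂ℙ :=
      setIntegral_congr_fun hS fun ω hω => abs_of_nonneg hω
    have e2 : ∫ ω in Sᶜ, |Z ω| ∂ℙ = ∫ ω in Sᶜ, (-Z ω) ∂ℙ :=
      setIntegral_congr_fun hS.compl fun ω hω => abs_of_neg (lt_of_not_ge hω)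
    rw [e1, e2, integral_neg]
    ring
  -- key identity : ∫ |Z| = ∫ f dμ - ∫ f dν
  have hkey : ∫ ω, |Z ω| ∂ℙ = (∫ p, f p ∂μ) - ∫ p, f p ∂ν := by
    rw [habsZ, hcondS, hcondSc, hμ_def, hν_def, comp X hX hXab hXint, comp Y hY hYab hYint]
    ring
  -- the tv-distance set bound
  have hset : ∀ A : Set (ℝ × 𝒴), MeasurableSet A → (μ A).toReal ≤ (ν A).toReal + ε := by
    intro A hA
    have hle1 : ∀ (κ : Measure (ℝ × 𝒴)) [IsProbabilityMeasure κ] (A : Set (ℝ × 𝒴)),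
        (κ A).toReal ≤ 1 := by
      intro κ _ A
      calc (κ A).toReal ≤ (κ Set.univ).toReal :=
            ENNReal.toReal_mono (measure_ne_top _ _) (measure_mono (Set.subset_univ A))
        _ = 1 := by simp
    have hbdd : BddAbove (Set.range fun A : {A : Set (ℝ × 𝒴) // MeasurableSet A} =>
        |(μ A.1).toReal - (ν A.1).toReal|) := by
      refine ⟨2, ?_⟩
      rintro x ⟨A, rfl⟩
      have h1 := hle1 μ A.1
      have h2 := hle1 ν A.1
      have h3 : (0:ℝ) ≤ (μ A.1).toReal := ENNReal.toReal_nonneg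
      have h4 : (0:ℝ) ≤ (ν A.1).toReal := ENNReal.toReal_nonneg
      rw [abs_le]
      constructor <;> linarith
    have hA' := (le_ciSup hbdd (⟨A, hA⟩ : {A : Set (ℝ × 𝒴) // MeasurableSet A})).trans htv
    have := (abs_le.1 hA').2
    linarith
  -- a.e. bounds of f under μ and ν
  have haebd : ∀ (W : Ω → ℝ), Measurable W → (∀ ω, W ω ∈ Set.Icc a b) →
      (0 ≤ᵐ[Measure.map (fun ω => (W ω, U ω)) ℙ] f ∧
       f ≤ᵐ[Measure.map (fun ω => (W ω, U ω)) ℙ] fun _ => b - a) := by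
    intro W hW hWab
    constructor
    · exact (ae_map_iff (hW.prodMk hU).aemeasurable (p := fun p => 0 ≤ f p)
        (measurableSet_le measurable_const hf)).2
        (ae_of_all _ fun ω => (hptw W hWab ω).1)
    · exact (ae_map_iff (hW.prodMk hU).aemeasurable (p := fun p => f p ≤ b - a)
        (measurableSet_le hf measurable_const)).2
        (ae_of_all _ fun ω => (hptw W hWab ω).2)
  obtain ⟨h0μ, hMμ⟩ := haebd X hX hXab
  obtain ⟨h0ν, hMν⟩ := haebd Y hY hYab
  have := aux_tv μ ν f hf (b - a) ε (by linarith) hε h0μ hMμ h0ν hMν hset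
  rw [hkey]
  linarith
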